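/- arXiv:2209.11076 — 3 statements merged into one kernel-verified Lean document; each statement's English description precedes it below -/
import Mathlib

section
/- Boltzmann ergotropy dominates observational ergotropy: with pᵢ = tr[Pᵢρ], Σᵢ pᵢ tr[H πᵢ] ≤ tr[H π_cg], where πᵢ is the passive state for (Pᵢ/Vᵢ, H) and π_cg is the passive state for (ρ_cg, H) with ρ_cg = Σᵢ (pᵢ/Vᵢ) Pᵢ. Hence W_C^B(ρ) = tr[H(ρ − Σᵢ pᵢπᵢ)] ≥ W_C(ρ) = tr[H(ρ − π_cg)]. -/
open Matrix
open scoped ComplexOrder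

lemma psd_trace_nonneg {n : Type*} [Fintype n] [DecidableEq n]
    {M : Matrix n n ℂ} (hM : M.PosSemidef) : 0 ≤ M.trace := by
  rw [Matrix.trace]
  apply Finset.sum_nonneg
  intro i _
  exact hM.diag_nonneg

lemma ptrace_nonneg {d : ℕ} (ρ P : Matrix (Fin d) (Fin d) ℂ) (hρ : ρ.PosSemidef)
    (hherm : Pᴴ = P) (hidem : P * P = P) : 0 ≤ (P * ρ).trace := by
  have h1 : (P * ρ * P).trace = (P * P * ρ).trace := Matrix.trace_mul_cycle P ρ P
  rw [hidem] at h1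
  have h2 : (P * ρ * P).PosSemidef := by
    have := hρ.conjTranspose_mul_mul_same P
    rwa [hherm] at this
  rw [← h1]; exact psd_trace_nonneg h2

/-- Boltzmann ergotropy dominates observational ergotropy:
with `pᵢ = tr[Pᵢρ]`, `Σᵢ pᵢ tr[Hπᵢ] ≤ tr[Hπ_cg]`, where `πᵢ` is the passive state for
`(Pᵢ/Vᵢ, H)` (i.e. it attains `min_U tr[H U (Pᵢ/Vᵢ) U†]`) and `π_cg` is the passive state
for `(ρ_cg, H)` with `ρ_cg = Σᵢ (pᵢ/Vᵢ)Pᵢ`. Hence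
`W_C^B(ρ) = tr[H(ρ − Σᵢ pᵢπᵢ)] ≥ W_C(ρ) = tr[H(ρ − π_cg)]`. -/
theorem stmt11 {d : ℕ} {ι : Type*} [Fintype ι]
    (H ρ : Matrix (Fin d) (Fin d) ℂ) (hH : H.IsHermitian)
    (hρ : ρ.PosSemidef) (hτ : ρ.trace = 1)
    (P : ι → Matrix (Fin d) (Fin d) ℂ) (V : ι → ℕ)
    (hherm : ∀ i, (P i)ᴴ = P i) (hidem : ∀ i, P i * P i = P i)
    (horth : ∀ i j, i ≠ j → P i * P j = 0) (hcompl : ∑ i, P i = 1)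
    (hV : ∀ i, (P i).trace = (V i : ℂ)) (hVpos : ∀ i, 0 < V i)
    (πi : ι → Matrix (Fin d) (Fin d) ℂ) (πcg : Matrix (Fin d) (Fin d) ℂ)
    (hπi : ∀ i, IsLeast {x : ℝ | ∃ U ∈ Matrix.unitaryGroup (Fin d) ℂ,
        (H * (U * ((V i : ℂ)⁻¹ • P i) * Uᴴ)).trace.re = x} ((H * πi i).trace.re))
    (hπcg : IsLeast {x : ℝ | ∃ U ∈ Matrix.unitaryGroup (Fin d) ℂ,
        (H * (U * (∑ i, ((P i * ρ).trace / (V i : ℂ)) • P i) * Uᴴ)).trace.re = x}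
      ((H * πcg).trace.re)) :
    (∑ i, (P i * ρ).trace.re * (H * πi i).trace.re) ≤ (H * πcg).trace.re ∧
    (H * (ρ - ∑ i, ((P i * ρ).trace.re : ℂ) • πi i)).trace.re
      ≥ (H * (ρ - πcg)).trace.re := by
  -- p i is real and nonnegative
  have hp : ∀ i, 0 ≤ (P i * ρ).trace := fun i =>
    ptrace_nonneg ρ (P i) hρ (hherm i) (hidem i)
  have hpre : ∀ i, 0 ≤ (P i * ρ).trace.re := fun i => (Complex.le_def.mp (hp i)).1
  have hpeq : ∀ i, (P i * ρ).trace = ((P i * ρ).trace.re : ℂ) := by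
    intro i
    have him : (P i * ρ).trace.im = 0 := ((Complex.le_def.mp (hp i)).2).symm
    exact Complex.ext rfl (by simp [him])
  -- main inequality
  obtain ⟨U, hU, hUeq⟩ := hπcg.1
  -- expand the trace as a sum
  have hexp : (H * (U * (∑ i, ((P i * ρ).trace / (V i : ℂ)) • P i) * Uᴴ)).trace
      = ∑ i, ((P i * ρ).trace.re : ℂ) * (H * (U * ((V i : ℂ)⁻¹ • P i) * Uᴴ)).trace := by
    rw [Matrix.mul_sum, Matrix.sum_mul, Matrix.mul_sum, Matrix.trace_sum]
    refine Finset.sum_congr rfl fun i _ => ?_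
    rw [Matrix.mul_smul, Matrix.smul_mul, Matrix.mul_smul, Matrix.trace_smul,
        Matrix.mul_smul, Matrix.smul_mul, Matrix.mul_smul, Matrix.trace_smul,
        smul_eq_mul, smul_eq_mul, div_eq_mul_inv, hpeq i]
    simp only [Complex.ofReal_re]
    ring
  have hterm : ∀ i, (H * πi i).trace.re ≤ (H * (U * ((V i : ℂ)⁻¹ • P i) * Uᴴ)).trace.re :=
    fun i => (hπi i).2 ⟨U, hU, rfl⟩
  have key : (∑ i, (P i * ρ).trace.re * (H * πi i).trace.re) ≤ (H * πcg).trace.re := by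
    rw [← hUeq]
    have : (H * (U * (∑ i, ((P i * ρ).trace / (V i : ℂ)) • P i) * Uᴴ)).trace.re
        = ∑ i, (P i * ρ).trace.re * (H * (U * ((V i : ℂ)⁻¹ • P i) * Uᴴ)).trace.re := by
      rw [hexp, Complex.re_sum]
      refine Finset.sum_congr rfl fun i _ => ?_
      simp [Complex.mul_re]
    rw [this]
    exact Finset.sum_le_sum fun i _ => mul_le_mul_of_nonneg_left (hterm i) (hpre i)
  refine ⟨key, ?_⟩
  have hsum : (H * (∑ i, ((P i * ρ).trace.re : ℂ) • πi i)).trace.re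
      = ∑ i, (P i * ρ).trace.re * (H * πi i).trace.re := by
    rw [Matrix.mul_sum, Matrix.trace_sum, Complex.re_sum]
    refine Finset.sum_congr rfl fun i _ => ?_
    rw [Matrix.mul_smul, Matrix.trace_smul, smul_eq_mul]
    simp [Complex.mul_re]
  rw [ge_iff_le, Matrix.mul_sub, Matrix.mul_sub, Matrix.trace_sub, Matrix.trace_sub,
      Complex.sub_re, Complex.sub_re, sub_le_sub_iff_left, hsum]
  exact key
end

section
/- Observational entropy upper-bounds von Neumann entropy: for any density matrix ρ and complete family of orthogonal projectors {Pᵢ}, S(ρ) ≤ S_C(ρ) = −Σᵢ pᵢ log(pᵢ/Vᵢ), with pᵢ = tr[Pᵢρ], Vᵢ = tr[Pᵢ]. -/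
open Matrix
open scoped ComplexOrder

/-- Von Neumann entropy `S(ρ) = −tr[ρ log ρ]`, computed via the eigenvalues of `ρ`
(junk value `0` if `ρ` is not Hermitian). -/
noncomputable def vnEntropy {d : ℕ} (ρ : Matrix (Fin d) (Fin d) ℂ) : ℝ :=
  if h : ρ.IsHermitian then -∑ i, h.eigenvalues i * Real.log (h.eigenvalues i) else 0

/-- Per-term inequality `a·x − a·y ≤ a·x·log x − a·x·log y` (with Lean's junk-value
conventions for `log 0` and division by zero handled by the side hypotheses). -/
lemma stmt14_term_ineq (a l p : ℝ) (v : ℕ) (ha : 0 ≤ a) (hl : 0 ≤ l) (hp : 0 ≤ p)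
    (hal : p = 0 → a * l = 0) (hav : (v:ℝ) = 0 → a = 0) :
    a * l - a * (p / v) ≤ a * l * Real.log l - a * l * Real.log (p / v) := by
  rcases eq_or_lt_of_le (Nat.cast_nonneg v : (0:ℝ) ≤ v) with hv | hv
  · rw [hav hv.symm]; simp
  rcases eq_or_lt_of_le hp with hp0 | hp0
  · have h := hal hp0.symm
    rw [← hp0]
    simp [h, mul_assoc, ← hp0]
  rcases eq_or_lt_of_le hl with hl0 | hl0
  · rw [← hl0]
    have : 0 ≤ a * (p / v) := by positivity
    simp; linarith
  · have hpv : 0 < p / v := div_pos hp0 hv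
    have h1 : Real.log ((p / v) / l) ≤ (p / v) / l - 1 :=
      Real.log_le_sub_one_of_pos (div_pos hpv hl0)
    rw [Real.log_div (ne_of_gt hpv) (ne_of_gt hl0)] at h1
    have h2 : l * (Real.log (p / v) - Real.log l) ≤ p / v - l := by
      have hll : l * (p / ↑v / l) = p / ↑v := by field_simp
      nlinarith [mul_le_mul_of_nonneg_left h1 hl0.le]
    nlinarith [mul_le_mul_of_nonneg_left h2 ha]

/-- The classical (commutative) core of the observational-entropy inequality:
if `a` is a nonnegative matrix with column sums `1` and row sums `V i`, and `l` is a
nonnegative vector, then the Shannon-type entropy of `l` is at most the coarse-grained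
entropy of `p i = ∑ k, a i k * l k` with volume weights `V i`. -/
lemma stmt14_key {ι κ : Type*} [Fintype ι] [Fintype κ] (a : ι → κ → ℝ) (l : κ → ℝ) (V : ι → ℕ)
    (ha : ∀ i k, 0 ≤ a i k) (hl : ∀ k, 0 ≤ l k)
    (hcol : ∀ k, ∑ i, a i k = 1) (hrow : ∀ i, ∑ k, a i k = (V i : ℝ)) :
    -∑ k, l k * Real.log (l k)
      ≤ -∑ i, (∑ k, a i k * l k) * Real.log ((∑ k, a i k * l k) / (V i : ℝ)) := by
  set p : ι → ℝ := fun i => ∑ k, a i k * l k with hp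
  have hpnn : ∀ i, 0 ≤ p i := fun i => Finset.sum_nonneg fun k _ => mul_nonneg (ha i k) (hl k)
  have hal : ∀ i k, p i = 0 → a i k * l k = 0 := fun i k h =>
    (Finset.sum_eq_zero_iff_of_nonneg
      (fun k _ => mul_nonneg (ha i k) (hl k))).mp h k (Finset.mem_univ k)
  have hav : ∀ i, (V i : ℝ) = 0 → ∀ k, a i k = 0 := by
    intro i h k
    have h0 : ∑ k, a i k = 0 := by rw [hrow i, h]
    exact (Finset.sum_eq_zero_iff_of_nonneg (fun k _ => ha i k)).mp h0 k (Finset.mem_univ k)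
  apply neg_le_neg
  have hbig : (0:ℝ) ≤ ∑ i, ∑ k,
      (a i k * l k * Real.log (l k) - a i k * l k * Real.log (p i / (V i : ℝ))) := by
    have hzero : ∑ i, ∑ k, (a i k * l k - a i k * (p i / (V i : ℝ))) = 0 := by
      have : ∀ i, ∑ k, (a i k * l k - a i k * (p i / (V i : ℝ)))
          = p i - p i / (V i : ℝ) * (V i : ℝ) := by
        intro i
        rw [Finset.sum_sub_distrib, ← Finset.sum_mul, hrow i, mul_comm]
      rw [Finset.sum_congr rfl (fun i _ => this i)]
      apply Finset.sum_eq_zero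
      intro i _
      rcases eq_or_ne ((V i : ℝ)) 0 with h | h
      · have hp0 : p i = 0 := Finset.sum_eq_zero fun k _ => by rw [hav i h k, zero_mul]
        rw [hp0, h]; ring
      · rw [div_mul_cancel₀ _ h]; ring
    rw [← hzero]
    exact Finset.sum_le_sum fun i _ => Finset.sum_le_sum fun k _ =>
      stmt14_term_ineq (a i k) (l k) (p i) (V i) (ha i k) (hl k) (hpnn i)
        (fun h => hal i k h) (fun h => hav i h k)
  have hL : ∑ i, p i * Real.log (p i / (V i : ℝ))
      = ∑ i, ∑ k, a i k * l k * Real.log (p i / (V i : ℝ)) := by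
    refine Finset.sum_congr rfl fun i _ => ?_
    rw [Finset.sum_mul]
  have hR : ∑ k, l k * Real.log (l k)
      = ∑ i, ∑ k, a i k * l k * Real.log (l k) := by
    rw [Finset.sum_comm]
    refine Finset.sum_congr rfl fun k _ => ?_
    rw [← Finset.sum_mul, ← Finset.sum_mul, hcol k, one_mul]
  rw [Finset.sum_congr rfl (fun i (_ : i ∈ Finset.univ) => Finset.sum_sub_distrib _ _),
    Finset.sum_sub_distrib] at hbig
  rw [hL, hR] at *
  linarith

/-- Observational entropy upper-bounds von Neumann entropy:
`S(ρ) ≤ S_C(ρ) = −Σᵢ pᵢ log(pᵢ/Vᵢ)`, with `pᵢ = tr[Pᵢρ]`, `Vᵢ = tr[Pᵢ]`. -/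
theorem stmt14 {d : ℕ} {ι : Type*} [Fintype ι]
    (ρ : Matrix (Fin d) (Fin d) ℂ) (hρ : ρ.PosSemidef) (hτ : ρ.trace = 1)
    (P : ι → Matrix (Fin d) (Fin d) ℂ) (V : ι → ℕ)
    (hherm : ∀ i, (P i)ᴴ = P i) (hidem : ∀ i, P i * P i = P i)
    (horth : ∀ i j, i ≠ j → P i * P j = 0) (hcompl : ∑ i, P i = 1)
    (hV : ∀ i, (P i).trace = (V i : ℂ)) :
    vnEntropy ρ ≤ -∑ i, (P i * ρ).trace.re * Real.log ((P i * ρ).trace.re / (V i : ℝ)) := by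
  have hH : ρ.IsHermitian := hρ.1
  set U : Matrix (Fin d) (Fin d) ℂ := (hH.eigenvectorUnitary : Matrix (Fin d) (Fin d) ℂ) with hU
  set lam : Fin d → ℝ := hH.eigenvalues with hlam
  have hUU : U * star U = 1 := (Matrix.mem_unitaryGroup_iff).mp hH.eigenvectorUnitary.2
  have hUU' : star U * U = 1 := (Matrix.mem_unitaryGroup_iff').mp hH.eigenvectorUnitary.2
  set A : ι → Matrix (Fin d) (Fin d) ℂ := fun i => star U * P i * U with hA
  set a : ι → Fin d → ℝ := fun i k => (A i k k).re with ha
  -- each `P i` is positive semidefinite, hence so is `A i`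
  have hPpsd : ∀ i, (P i).PosSemidef := by
    intro i
    have : P i = (P i)ᴴ * P i := by rw [hherm i, hidem i]
    rw [this]
    exact posSemidef_conjTranspose_mul_self (P i)
  have hApsd : ∀ i, (A i).PosSemidef := fun i =>
    (hPpsd i).conjTranspose_mul_mul_same U
  -- diagonal entries of `A i` are nonnegative
  have hanneg : ∀ i k, 0 ≤ a i k := by
    intro i k
    have h := (hApsd i).dotProduct_mulVec_nonneg (Pi.single k 1)
    have hv : star (Pi.single k 1 : Fin d → ℂ) ⬝ᵥ ((A i) *ᵥ Pi.single k 1) = A i k k := by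
      simp [dotProduct, mulVec, Pi.single_apply]
    rw [hv] at h
    exact (Complex.le_def.mp h).1
  -- trace formula via the spectral theorem
  have htr : ∀ i, (P i * ρ).trace = ∑ k, A i k k * (lam k : ℂ) := by
    intro i
    conv_lhs => rw [hH.spectral_theorem, Unitary.conjStarAlgAut_apply]
    rw [← mul_assoc, ← mul_assoc, trace_mul_cycle]
    simp [Matrix.trace, Matrix.diag, mul_diagonal, hA, Function.comp, Matrix.mul_assoc]
    rfl
  have hpre : ∀ i, (P i * ρ).trace.re = ∑ k, a i k * lam k := by
    intro i
    rw [htr i]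
    simp [Complex.mul_re, ha]
  -- column sums equal 1
  have hAsum : ∑ i, A i = 1 := by
    have : ∑ i, A i = star U * (∑ i, P i) * U := by
      rw [Finset.mul_sum, Finset.sum_mul]
    rw [this, hcompl, mul_one, hUU']
  have hcol : ∀ k, ∑ i, a i k = 1 := by
    intro k
    have h1 : ∑ i, A i k k = 1 := by
      have := congrArg (fun M => M k k) hAsum
      simpa [Matrix.sum_apply, Matrix.one_apply] using this
    have : (∑ i, A i k k).re = (1:ℂ).re := by rw [h1]
    simpa [Complex.re_sum] using this
  -- row sums equal V i
  have hrow : ∀ i, ∑ k, a i k = (V i : ℝ) := by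
    intro i
    have htrA : (A i).trace = (V i : ℂ) := by
      rw [hA]
      show (star U * P i * U).trace = _
      rw [trace_mul_comm, ← mul_assoc, hUU, one_mul, hV i]
    have : ((A i).trace).re = ((V i : ℂ)).re := by rw [htrA]
    simpa [Matrix.trace, Matrix.diag, Complex.re_sum, ha] using this
  -- eigenvalues nonneg
  have hlnn : ∀ k, 0 ≤ lam k := fun k => hρ.eigenvalues_nonneg k
  -- conclude
  rw [vnEntropy, dif_pos hH]
  have := stmt14_key a lam V hanneg hlnn hcol hrow
  calc -∑ k, hH.eigenvalues k * Real.log (hH.eigenvalues k)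
      = -∑ k, lam k * Real.log (lam k) := by rw [hlam]
    _ ≤ -∑ i, (∑ k, a i k * lam k) * Real.log ((∑ k, a i k * lam k) / (V i : ℝ)) := this
    _ = -∑ i, (P i * ρ).trace.re * Real.log ((P i * ρ).trace.re / (V i : ℝ)) := by
        congr 1
        exact Finset.sum_congr rfl fun i _ => by rw [hpre i]
end

section
/- Energy estimate for bipartite local-energy coarse-graining: let H = H₁⊗I + I⊗H₂ + H_int on ℂ^{d₁}⊗ℂ^{d₂}, and let ρ_cg be the coarse-grained state for the coarse-graining by products of spectral projectors of H₁ and H₂ onto energy windows of width ΔE. Then |tr[Hρ] − tr[Hρ_cg]| ≤ 2‖H_int‖ + 2ΔE for every density matrix ρ, where ‖·‖ is the operator norm. -/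
open Matrix Kronecker
open scoped ComplexOrder

/-- The spectral projector of `W (diag e) W†` onto the group of eigenvectors labelled by
window `m` (eigenvector `k` belongs to window `g k`). -/
noncomputable def specProj {d : ℕ} {ι : Type*} [DecidableEq ι]
    (W : Matrix.unitaryGroup (Fin d) ℂ) (g : Fin d → ι) (m : ι) :
    Matrix (Fin d) (Fin d) ℂ :=
  (W : Matrix (Fin d) (Fin d) ℂ) *
    Matrix.diagonal (fun k : Fin d => if g k = m then (1 : ℂ) else 0) *
    (W : Matrix (Fin d) (Fin d) ℂ)ᴴ

/-- A Hermitian matrix presented by its spectral data: `W (diag e) W†`. -/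
noncomputable def diagH {d : ℕ} (W : Matrix.unitaryGroup (Fin d) ℂ) (e : Fin d → ℝ) :
    Matrix (Fin d) (Fin d) ℂ :=
  (W : Matrix (Fin d) (Fin d) ℂ) * Matrix.diagonal (fun k : Fin d => (e k : ℂ)) *
    (W : Matrix (Fin d) (Fin d) ℂ)ᴴ

lemma quad_le {n : Type*} [Fintype n] [DecidableEq n] (A : Matrix n n ℂ) (x : n → ℂ) :
    ‖star x ⬝ᵥ (A *ᵥ x)‖ ≤
      ‖Matrix.toEuclideanCLM (𝕜 := ℂ) A‖ * (∑ k, ‖x k‖ ^ 2) := by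
  set T := Matrix.toEuclideanCLM (𝕜 := ℂ) A
  set X : EuclideanSpace ℂ n := (WithLp.equiv 2 _).symm x
  have h1 : star x ⬝ᵥ (A *ᵥ x) = inner ℂ X (T X) := by
    rw [dotProduct_comm]; rfl
  have h2 : ‖X‖ ^ 2 = ∑ k, ‖x k‖ ^ 2 := by
    exact PiLp.norm_sq_eq_of_L2 (fun _ : n => ℂ) X
  calc ‖star x ⬝ᵥ (A *ᵥ x)‖ = ‖(inner ℂ X (T X) : ℂ)‖ := by
        rw [h1]
    _ ≤ ‖X‖ * ‖T X‖ := norm_inner_le_norm _ _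
    _ ≤ ‖X‖ * (‖T‖ * ‖X‖) := by gcongr; exact T.le_opNorm X
    _ = ‖T‖ * ‖X‖ ^ 2 := by ring
    _ = _ := by rw [h2]

lemma trace_conj_diag {n : Type*} [Fintype n] [DecidableEq n] (U : Matrix n n ℂ)
    (f : n → ℂ) (M : Matrix n n ℂ) :
    ((U * Matrix.diagonal f * Uᴴ) * M).trace = ∑ p, f p * (Uᴴ * M * U) p p := by
  rw [show (U * Matrix.diagonal f * Uᴴ) * M = U * (Matrix.diagonal f * (Uᴴ * M)) by
    simp [Matrix.mul_assoc]]
  rw [Matrix.trace_mul_comm]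
  simp [Matrix.trace, Matrix.diag, Matrix.diagonal_mul, Matrix.mul_assoc]

lemma abs_trace_mul_le {n : Type*} [Fintype n] [DecidableEq n]
    (A σ : Matrix n n ℂ) (hσ : σ.PosSemidef) :
    ‖(A * σ).trace‖ ≤ ‖Matrix.toEuclideanCLM (𝕜 := ℂ) A‖ * (σ.trace).re := by
  set V : Matrix n n ℂ := (hσ.1.eigenvectorUnitary : Matrix n n ℂ) with hVdef
  have hV : Vᴴ * V = 1 := by
    simpa [Matrix.star_eq_conjTranspose] using (hσ.1.eigenvectorUnitary).2.1
  set μ := hσ.1.eigenvalues with hμdef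
  have hspec : σ = V * Matrix.diagonal (fun j => (μ j : ℂ)) * Vᴴ := by
    simpa [Matrix.star_eq_conjTranspose, Function.comp_def] using hσ.1.spectral_theorem
  have hμnn : ∀ j, 0 ≤ μ j := hσ.eigenvalues_nonneg
  -- column norms
  have hcol : ∀ j, ∑ k, ‖V k j‖ ^ 2 = 1 := by
    intro j
    have h1 : (Vᴴ * V) j j = 1 := by rw [hV]; simp
    have h2 : (∑ k, (starRingEnd ℂ) (V k j) * V k j) = 1 := by
      rw [← h1]; simp [Matrix.mul_apply, Matrix.conjTranspose_apply]
    calc ∑ k, ‖V k j‖ ^ 2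
        = Complex.re (∑ k, (starRingEnd ℂ) (V k j) * V k j) := by
          rw [Complex.re_sum]
          congr 1; ext k
          rw [mul_comm, Complex.mul_conj]
          simp [Complex.normSq_eq_norm_sq, ← Complex.ofReal_pow]
      _ = 1 := by rw [h2]; simp
  -- diag entries of V† A V
  have hdiag : ∀ j, (Vᴴ * A * V) j j = star (fun k => V k j) ⬝ᵥ (A *ᵥ fun k => V k j) := by
    intro j
    simp [Matrix.mul_apply, dotProduct, Matrix.mulVec, Matrix.conjTranspose_apply,
      Finset.mul_sum, Finset.sum_mul]
    rw [Finset.sum_comm]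
    congr 1; ext k; congr 1; ext l; ring
  have hbd : ∀ j, ‖(Vᴴ * A * V) j j‖ ≤ ‖Matrix.toEuclideanCLM (𝕜 := ℂ) A‖ := by
    intro j
    rw [hdiag j]
    calc _ ≤ ‖Matrix.toEuclideanCLM (𝕜 := ℂ) A‖ * (∑ k, ‖V k j‖ ^ 2) := quad_le A _
      _ = _ := by rw [hcol]; ring
  -- trace formula
  have htr : (A * σ).trace = ∑ j, (μ j : ℂ) * (Vᴴ * A * V) j j := by
    rw [hspec, Matrix.trace_mul_comm, trace_conj_diag]
  have htrσ : (σ.trace).re = ∑ j, μ j := by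
    have h : σ.trace = ∑ j, (μ j : ℂ) := by
      nth_rewrite 1 [hspec, show V * Matrix.diagonal (fun j => (μ j : ℂ)) * Vᴴ
        = (V * Matrix.diagonal (fun j => (μ j : ℂ)) * Vᴴ) * 1 by rw [mul_one]]
      rw [trace_conj_diag]
      simp [Matrix.mul_assoc, hV]
    rw [h]; simp
  rw [htr, htrσ]
  calc ‖∑ j, (μ j : ℂ) * (Vᴴ * A * V) j j‖
      = ‖∑ j, (μ j : ℂ) * (Vᴴ * A * V) j j‖ := rfl
    _ ≤ ∑ j, ‖(μ j : ℂ) * (Vᴴ * A * V) j j‖ := norm_sum_le _ _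
    _ ≤ ∑ j, μ j * ‖Matrix.toEuclideanCLM (𝕜 := ℂ) A‖ := by
        apply Finset.sum_le_sum
        intro j _
        rw [norm_mul, Complex.norm_real, Real.norm_eq_abs, abs_of_nonneg (hμnn j)]
        exact mul_le_mul_of_nonneg_left (hbd j) (hμnn j)
    _ = _ := by rw [← Finset.sum_mul]; ring

lemma kron_conjT {l m p q : Type*} [Fintype l] [Fintype m] [Fintype p] [Fintype q]
    (A : Matrix l m ℂ) (B : Matrix p q ℂ) : (A ⊗ₖ B)ᴴ = Aᴴ ⊗ₖ Bᴴ := by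
  ext ⟨i, j⟩ ⟨k, l⟩
  simp [Matrix.conjTranspose_apply, Matrix.kroneckerMap_apply, mul_comm]

lemma diag_nonneg' {n : Type*} [Fintype n] [DecidableEq n] {M : Matrix n n ℂ}
    (h : M.PosSemidef) (i : n) : 0 ≤ M i i := by
  exact h.diag_nonneg

set_option maxHeartbeats 2000000 in
/-- Energy estimate for bipartite local-energy coarse-graining:
with `H = H₁⊗I + I⊗H₂ + H_int` and `ρ_cg` the coarse-grained state for the coarse-graining
by products of spectral projectors of `H₁`, `H₂` onto energy windows of width `ΔE`
(each eigenvalue lies in the window it is assigned to), we have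
`|tr[Hρ] − tr[Hρ_cg]| ≤ 2‖H_int‖ + 2ΔE` (operator norm). -/
theorem stmt16 {d₁ d₂ : ℕ} {ι₁ ι₂ : Type*}
    [Fintype ι₁] [DecidableEq ι₁] [Fintype ι₂] [DecidableEq ι₂]
    (W₁ : Matrix.unitaryGroup (Fin d₁) ℂ) (W₂ : Matrix.unitaryGroup (Fin d₂) ℂ)
    (e₁ : Fin d₁ → ℝ) (e₂ : Fin d₂ → ℝ)
    (g₁ : Fin d₁ → ι₁) (g₂ : Fin d₂ → ι₂)
    (E₁' : ι₁ → ℝ) (E₂' : ι₂ → ℝ) (ΔE : ℝ) (hΔE : 0 < ΔE)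
    (hwin₁ : ∀ k, E₁' (g₁ k) ≤ e₁ k ∧ e₁ k < E₁' (g₁ k) + ΔE)
    (hwin₂ : ∀ k, E₂' (g₂ k) ≤ e₂ k ∧ e₂ k < E₂' (g₂ k) + ΔE)
    (Hint ρ : Matrix (Fin d₁ × Fin d₂) (Fin d₁ × Fin d₂) ℂ)
    (hint : Hint.IsHermitian) (hρ : ρ.PosSemidef) (hτ : ρ.trace = 1)
    (H : Matrix (Fin d₁ × Fin d₂) (Fin d₁ × Fin d₂) ℂ)
    (hHdef : H = diagH W₁ e₁ ⊗ₖ (1 : Matrix (Fin d₂) (Fin d₂) ℂ)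
        + (1 : Matrix (Fin d₁) (Fin d₁) ℂ) ⊗ₖ diagH W₂ e₂ + Hint)
    (ρcg : Matrix (Fin d₁ × Fin d₂) (Fin d₁ × Fin d₂) ℂ)
    (hcg : ρcg = ∑ m₁ : ι₁, ∑ m₂ : ι₂,
        (((specProj W₁ g₁ m₁ ⊗ₖ specProj W₂ g₂ m₂) * ρ).trace /
            (specProj W₁ g₁ m₁ ⊗ₖ specProj W₂ g₂ m₂).trace) •
          (specProj W₁ g₁ m₁ ⊗ₖ specProj W₂ g₂ m₂)) :
    ‖(H * (ρ - ρcg)).trace‖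
      ≤ 2 * ‖Matrix.toEuclideanCLM (𝕜 := ℂ) Hint‖ + 2 * ΔE := by
  classical
  set U : Matrix (Fin d₁ × Fin d₂) (Fin d₁ × Fin d₂) ℂ :=
    (W₁ : Matrix (Fin d₁) (Fin d₁) ℂ) ⊗ₖ (W₂ : Matrix (Fin d₂) (Fin d₂) ℂ) with hUdef
  have hW₁ : (W₁ : Matrix (Fin d₁) (Fin d₁) ℂ)ᴴ * W₁ = 1 := by
    simpa [Matrix.star_eq_conjTranspose] using W₁.2.1
  have hW₁' : (W₁ : Matrix (Fin d₁) (Fin d₁) ℂ) * (W₁ : Matrix (Fin d₁) (Fin d₁) ℂ)ᴴ = 1 := by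
    simpa [Matrix.star_eq_conjTranspose] using W₁.2.2
  have hW₂ : (W₂ : Matrix (Fin d₂) (Fin d₂) ℂ)ᴴ * W₂ = 1 := by
    simpa [Matrix.star_eq_conjTranspose] using W₂.2.1
  have hW₂' : (W₂ : Matrix (Fin d₂) (Fin d₂) ℂ) * (W₂ : Matrix (Fin d₂) (Fin d₂) ℂ)ᴴ = 1 := by
    simpa [Matrix.star_eq_conjTranspose] using W₂.2.2
  have hUH : Uᴴ = (W₁ : Matrix (Fin d₁) (Fin d₁) ℂ)ᴴ ⊗ₖ (W₂ : Matrix (Fin d₂) (Fin d₂) ℂ)ᴴ :=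
    kron_conjT _ _
  have hU1 : Uᴴ * U = 1 := by
    rw [hUH, hUdef, ← Matrix.mul_kronecker_mul, hW₁, hW₂, Matrix.one_kronecker_one]
  have hU2 : U * Uᴴ = 1 := by
    rw [hUH, hUdef, ← Matrix.mul_kronecker_mul, hW₁', hW₂', Matrix.one_kronecker_one]
  have hkron : ∀ (f₁ : Fin d₁ → ℂ) (f₂ : Fin d₂ → ℂ),
      ((W₁ : Matrix (Fin d₁) (Fin d₁) ℂ) * Matrix.diagonal f₁ *
          (W₁ : Matrix (Fin d₁) (Fin d₁) ℂ)ᴴ) ⊗ₖ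
        ((W₂ : Matrix (Fin d₂) (Fin d₂) ℂ) * Matrix.diagonal f₂ *
          (W₂ : Matrix (Fin d₂) (Fin d₂) ℂ)ᴴ)
        = U * Matrix.diagonal (fun p : Fin d₁ × Fin d₂ => f₁ p.1 * f₂ p.2) * Uᴴ := by
    intro f₁ f₂
    rw [hUH, hUdef, Matrix.mul_kronecker_mul, Matrix.mul_kronecker_mul,
      Matrix.diagonal_kronecker_diagonal]
  -- conjugated forms of the pieces
  have hA : diagH W₁ e₁ ⊗ₖ (1 : Matrix (Fin d₂) (Fin d₂) ℂ)
      = U * Matrix.diagonal (fun p : Fin d₁ × Fin d₂ => (e₁ p.1 : ℂ)) * Uᴴ := by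
    have h1eq : (1 : Matrix (Fin d₂) (Fin d₂) ℂ)
        = (W₂ : Matrix (Fin d₂) (Fin d₂) ℂ) * Matrix.diagonal (fun _ => (1:ℂ)) *
          (W₂ : Matrix (Fin d₂) (Fin d₂) ℂ)ᴴ := by
      rw [Matrix.diagonal_one, mul_one, hW₂']
    rw [diagH, h1eq, hkron]
    simp only [mul_one]
  have hB : (1 : Matrix (Fin d₁) (Fin d₁) ℂ) ⊗ₖ diagH W₂ e₂
      = U * Matrix.diagonal (fun p : Fin d₁ × Fin d₂ => (e₂ p.2 : ℂ)) * Uᴴ := by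
    have h1eq : (1 : Matrix (Fin d₁) (Fin d₁) ℂ)
        = (W₁ : Matrix (Fin d₁) (Fin d₁) ℂ) * Matrix.diagonal (fun _ => (1:ℂ)) *
          (W₁ : Matrix (Fin d₁) (Fin d₁) ℂ)ᴴ := by
      rw [Matrix.diagonal_one, mul_one, hW₁']
    rw [diagH, h1eq, hkron]
    simp only [one_mul]
  set χ : ι₁ × ι₂ → (Fin d₁ × Fin d₂) → ℂ :=
    fun m p => if g₁ p.1 = m.1 ∧ g₂ p.2 = m.2 then 1 else 0 with hχ
  have hP : ∀ m₁ m₂, specProj W₁ g₁ m₁ ⊗ₖ specProj W₂ g₂ m₂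
      = U * Matrix.diagonal (χ (m₁, m₂)) * Uᴴ := by
    intro m₁ m₂
    rw [specProj, specProj, hkron]
    have he : (fun p : Fin d₁ × Fin d₂ =>
        (if g₁ p.1 = m₁ then (1:ℂ) else 0) * (if g₂ p.2 = m₂ then 1 else 0)) = χ (m₁, m₂) := by
      funext p
      by_cases h₁ : g₁ p.1 = m₁ <;> by_cases h₂ : g₂ p.2 = m₂ <;> simp [hχ, h₁, h₂]
    rw [he]
  -- the conjugated density matrix
  set s : Fin d₁ × Fin d₂ → ℂ := fun p => (Uᴴ * ρ * U) p p with hs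
  have hσpsd : (Uᴴ * ρ * U).PosSemidef := hρ.conjTranspose_mul_mul_same U
  have hs0 : ∀ p, 0 ≤ s p := fun p => diag_nonneg' hσpsd p
  set r : Fin d₁ × Fin d₂ → ℝ := fun p => (s p).re with hr
  have hsr : ∀ p, s p = (r p : ℂ) := by
    intro p
    have h := Complex.nonneg_iff.mp (hs0 p)
    exact Complex.ext rfl (by simpa using h.2.symm)
  have hr0 : ∀ p, 0 ≤ r p := fun p => (Complex.nonneg_iff.mp (hs0 p)).1
  have hrsum : ∑ p, r p = 1 := by
    have h1 : (Uᴴ * ρ * U).trace = 1 := by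
      rw [Matrix.trace_mul_comm, ← Matrix.mul_assoc, hU2, one_mul, hτ]
    have h2 : ∑ p, s p = 1 := by
      simpa [Matrix.trace, Matrix.diag] using h1
    have := congrArg Complex.re h2
    simpa [Complex.re_sum] using this
  -- fibers
  set G : Fin d₁ × Fin d₂ → ι₁ × ι₂ := fun p => (g₁ p.1, g₂ p.2) with hG
  set fib : ι₁ × ι₂ → Finset (Fin d₁ × Fin d₂) :=
    fun m => Finset.univ.filter (fun p => G p = m) with hfib
  have hχfib : ∀ m p, χ m p = if G p = m then 1 else 0 := by
    intro m p
    simp [hχ, hG, Prod.ext_iff]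
  set pR : ι₁ × ι₂ → ℝ := fun m => ∑ p ∈ fib m, r p with hpR
  have hpR0 : ∀ m, 0 ≤ pR m := fun m => Finset.sum_nonneg fun p _ => hr0 p
  -- traces of the blocks
  have hnum : ∀ m₁ m₂, ((specProj W₁ g₁ m₁ ⊗ₖ specProj W₂ g₂ m₂) * ρ).trace
      = ((pR (m₁, m₂) : ℝ) : ℂ) := by
    intro m₁ m₂
    rw [hP, trace_conj_diag]
    calc ∑ p, χ (m₁, m₂) p * (Uᴴ * ρ * U) p p
        = ∑ p, if G p = (m₁, m₂) then s p else 0 := by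
          apply Finset.sum_congr rfl
          intro p _
          rw [hχfib]
          by_cases h : G p = (m₁, m₂) <;> simp [h, hs]
      _ = ∑ p ∈ fib (m₁, m₂), s p := by rw [← Finset.sum_filter]
      _ = _ := by
          rw [hpR]
          push_cast
          exact Finset.sum_congr rfl fun p _ => hsr p
  have hden : ∀ m₁ m₂, (specProj W₁ g₁ m₁ ⊗ₖ specProj W₂ g₂ m₂).trace
      = ((fib (m₁, m₂)).card : ℂ) := by
    intro m₁ m₂
    rw [hP, Matrix.trace_mul_cycle, hU1, one_mul, Matrix.trace_diagonal]
    calc ∑ p, χ (m₁, m₂) p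
        = ∑ p, if G p = (m₁, m₂) then (1:ℂ) else 0 :=
          Finset.sum_congr rfl fun p _ => hχfib _ p
      _ = _ := by rw [Finset.sum_boole]
  -- the coarse-grained weights
  set q : Fin d₁ × Fin d₂ → ℝ := fun p => pR (G p) / (fib (G p)).card with hq
  have hq0 : ∀ p, 0 ≤ q p := fun p => div_nonneg (hpR0 _) (Nat.cast_nonneg _)
  set w : Fin d₁ × Fin d₂ → ℂ := fun p => ((q p : ℝ) : ℂ) with hw
  have hρcg : ρcg = U * Matrix.diagonal w * Uᴴ := by
    rw [hcg]
    have hterm : ∀ m₁ m₂,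
        (((specProj W₁ g₁ m₁ ⊗ₖ specProj W₂ g₂ m₂) * ρ).trace /
            (specProj W₁ g₁ m₁ ⊗ₖ specProj W₂ g₂ m₂).trace) •
          (specProj W₁ g₁ m₁ ⊗ₖ specProj W₂ g₂ m₂)
        = U * (((pR (m₁, m₂) / (fib (m₁, m₂)).card : ℝ) : ℂ) •
            Matrix.diagonal (χ (m₁, m₂))) * Uᴴ := by
      intro m₁ m₂
      rw [hnum, hden, hP, Matrix.mul_smul, Matrix.smul_mul]
      congr 1
      push_cast
      ring
    rw [Finset.sum_congr rfl fun m₁ _ => Finset.sum_congr rfl fun m₂ _ => hterm m₁ m₂]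
    simp only [← Finset.sum_mul, ← Finset.mul_sum]
    congr 1
    congr 1
    ext i j
    simp only [Matrix.sum_apply, Matrix.smul_apply, Matrix.diagonal_apply, smul_eq_mul]
    by_cases hij : i = j
    · subst hij
      simp only [if_pos rfl]
      rw [hw, hq]
      calc ∑ m₁, ∑ m₂, ((pR (m₁, m₂) / ((fib (m₁, m₂)).card : ℝ) : ℝ) : ℂ) * χ (m₁, m₂) i
          = ∑ m₁, ∑ m₂, if (G i).1 = m₁ ∧ (G i).2 = m₂ then
              ((pR (m₁, m₂) / ((fib (m₁, m₂)).card : ℝ) : ℝ) : ℂ) else 0 := by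
            apply Finset.sum_congr rfl; intro m₁ _
            apply Finset.sum_congr rfl; intro m₂ _
            rw [hχfib]
            by_cases h : G i = (m₁, m₂)
            · simp only [h, if_pos rfl, if_true, mul_one]
              rw [if_pos ⟨trivial, trivial⟩]
            · have h' : ¬(g₁ i.1 = m₁ ∧ g₂ i.2 = m₂) := fun hc => h (Prod.ext hc.1 hc.2)
              rw [if_neg h, if_neg (fun hc => h (Prod.ext hc.1 hc.2)), mul_zero]
          _ = ((pR (G i) / ((fib (G i)).card : ℝ) : ℝ) : ℂ) := by
            rw [Finset.sum_comm]
            simp [ite_and, Finset.sum_ite_eq', Finset.sum_ite_eq]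
    · simp [hij]
  -- positivity and trace of the coarse-grained state
  have hwnn : ∀ p, 0 ≤ w p := by
    intro p
    exact Complex.zero_le_real.mpr (hq0 p)
  have hρcgpsd : ρcg.PosSemidef := by
    rw [hρcg]
    exact (Matrix.posSemidef_diagonal_iff.mpr hwnn).mul_mul_conjTranspose_same U
  have hfibsum : ∀ (F : Fin d₁ × Fin d₂ → ℝ),
      ∑ m : ι₁ × ι₂, ∑ p ∈ fib m, F p = ∑ p, F p := by
    intro F
    rw [hfib]
    exact Finset.sum_fiberwise_of_maps_to (fun p _ => Finset.mem_univ (G p)) F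
  have hmem : ∀ m : ι₁ × ι₂, ∀ p ∈ fib m, G p = m := by
    intro m p hp
    rw [hfib] at hp
    exact (Finset.mem_filter.mp hp).2
  have hqsum : ∑ p, q p = 1 := by
    rw [← hfibsum q]
    have h2 : ∀ m : ι₁ × ι₂, ∑ p ∈ fib m, q p = pR m := by
      intro m
      by_cases hne : (fib m).Nonempty
      · have hcard : ((fib m).card : ℝ) ≠ 0 := by
          exact Nat.cast_ne_zero.mpr (Finset.card_pos.mpr hne).ne'
        have hconst : ∀ p ∈ fib m, q p = pR m / (fib m).card := by
          intro p hp
          rw [hq]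
          simp only [hmem m p hp]
        rw [Finset.sum_congr rfl hconst, Finset.sum_const, nsmul_eq_mul]
        field_simp
      · rw [Finset.not_nonempty_iff_eq_empty] at hne
        have h0 : pR m = 0 := by rw [hpR]; simp [hne]
        rw [hne, h0, Finset.sum_empty]
    rw [Finset.sum_congr rfl fun m _ => h2 m]
    rw [show ∑ m : ι₁ × ι₂, pR m = ∑ m : ι₁ × ι₂, ∑ p ∈ fib m, r p from by rw [hpR],
      hfibsum r, hrsum]
  have hcgtrace : ρcg.trace = 1 := by
    rw [hρcg, Matrix.trace_mul_cycle, hU1, one_mul, Matrix.trace_diagonal]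
    rw [show ∑ p, w p = ((∑ p, q p : ℝ) : ℂ) from by rw [hw]; push_cast; rfl, hqsum]
    norm_num
  -- the diagonal hamiltonian
  set F : Fin d₁ × Fin d₂ → ℝ := fun p => e₁ p.1 + e₂ p.2 with hF
  have hH2 : H = U * Matrix.diagonal (fun p => ((F p : ℝ) : ℂ)) * Uᴴ + Hint := by
    rw [hHdef, hA, hB, ← Matrix.add_mul, ← Matrix.mul_add, Matrix.diagonal_add]
    congr 3
    funext p
    rw [hF]
    push_cast
    ring
  have hUcg : Uᴴ * ρcg * U = Matrix.diagonal w := by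
    rw [hρcg, show Uᴴ * (U * Matrix.diagonal w * Uᴴ) * U
      = (Uᴴ * U) * Matrix.diagonal w * (Uᴴ * U) from by simp [Matrix.mul_assoc], hU1,
      one_mul, mul_one]
  have t1 : ((U * Matrix.diagonal (fun p => ((F p : ℝ) : ℂ)) * Uᴴ) * ρ).trace
      = ∑ p, ((F p : ℝ) : ℂ) * s p := by
    rw [trace_conj_diag]
  have t2 : ((U * Matrix.diagonal (fun p => ((F p : ℝ) : ℂ)) * Uᴴ) * ρcg).trace
      = ∑ p, ((F p : ℝ) : ℂ) * w p := by
    rw [trace_conj_diag, hUcg]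
    exact Finset.sum_congr rfl fun p _ => by rw [Matrix.diagonal_apply_eq]
  have hsplit : (H * (ρ - ρcg)).trace
      = ((∑ p, F p * (r p - q p) : ℝ) : ℂ) + ((Hint * ρ).trace - (Hint * ρcg).trace) := by
    rw [hH2, Matrix.add_mul, Matrix.trace_add, Matrix.mul_sub, Matrix.trace_sub, t1, t2,
      Matrix.mul_sub, Matrix.trace_sub]
    have he : ∑ p, ((F p : ℝ):ℂ) * s p - ∑ p, ((F p : ℝ):ℂ) * w p
        = ((∑ p, F p * (r p - q p) : ℝ) : ℂ) := by
      push_cast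
      rw [← Finset.sum_sub_distrib]
      apply Finset.sum_congr rfl
      intro p _
      rw [hsr p, hw]
      push_cast
      ring
    rw [he]
  -- the real estimate on the diagonal part
  have hblock : ∀ m : ι₁ × ι₂, |∑ p ∈ fib m, F p * (r p - q p)| ≤ 2 * ΔE * pR m := by
    intro m
    by_cases hne : (fib m).Nonempty
    · set a := E₁' m.1 + E₂' m.2 with ha
      have hFlb : ∀ p ∈ fib m, a ≤ F p := by
        intro p hp
        have h1 : g₁ p.1 = m.1 := congrArg Prod.fst (hmem m p hp)
        have h2 : g₂ p.2 = m.2 := congrArg Prod.snd (hmem m p hp)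
        rw [ha, hF, ← h1, ← h2]
        have u1 := (hwin₁ p.1).1
        have u2 := (hwin₂ p.2).1
        dsimp only
        linarith
      have hFub : ∀ p ∈ fib m, F p ≤ a + 2 * ΔE := by
        intro p hp
        have h1 : g₁ p.1 = m.1 := congrArg Prod.fst (hmem m p hp)
        have h2 : g₂ p.2 = m.2 := congrArg Prod.snd (hmem m p hp)
        rw [ha, hF, ← h1, ← h2]
        have u1 := (hwin₁ p.1).2
        have u2 := (hwin₂ p.2).2
        dsimp only
        linarith
      have hcard : (0:ℝ) < (fib m).card := by exact_mod_cast Finset.card_pos.mpr hne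
      set cm := pR m / (fib m).card with hcm
      have hcm0 : 0 ≤ cm := div_nonneg (hpR0 m) hcard.le
      have hqc : ∀ p ∈ fib m, q p = cm := by
        intro p hp
        rw [hq]
        simp only [hmem m p hp]
        exact hcm.symm
      have hsumeq : ∑ p ∈ fib m, F p * (r p - q p)
          = (∑ p ∈ fib m, F p * r p) - (∑ p ∈ fib m, F p) * cm := by
        rw [Finset.sum_mul, ← Finset.sum_sub_distrib]
        apply Finset.sum_congr rfl
        intro p hp
        rw [hqc p hp]
        ring
      have hpRm : pR m = ∑ p ∈ fib m, r p := by rw [hpR]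
      have hx1 : a * pR m ≤ ∑ p ∈ fib m, F p * r p := by
        rw [hpRm, Finset.mul_sum]
        exact Finset.sum_le_sum fun p hp => mul_le_mul_of_nonneg_right (hFlb p hp) (hr0 p)
      have hx2 : ∑ p ∈ fib m, F p * r p ≤ (a + 2 * ΔE) * pR m := by
        rw [hpRm, Finset.mul_sum]
        exact Finset.sum_le_sum fun p hp => mul_le_mul_of_nonneg_right (hFub p hp) (hr0 p)
      have hcmcard : ((fib m).card : ℝ) * cm = pR m := by
        rw [hcm, mul_comm]
        exact div_mul_cancel₀ _ hcard.ne'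
      have hy1 : a * pR m ≤ (∑ p ∈ fib m, F p) * cm := by
        have hlow : ((fib m).card : ℝ) * a ≤ ∑ p ∈ fib m, F p := by
          calc ((fib m).card : ℝ) * a = ∑ _p ∈ fib m, a := by
                rw [Finset.sum_const, nsmul_eq_mul]
            _ ≤ _ := Finset.sum_le_sum hFlb
        calc a * pR m = (((fib m).card : ℝ) * a) * cm := by
              rw [mul_comm ((fib m).card : ℝ) a, mul_assoc, hcmcard]
          _ ≤ _ := mul_le_mul_of_nonneg_right hlow hcm0
      have hy2 : (∑ p ∈ fib m, F p) * cm ≤ (a + 2 * ΔE) * pR m := by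
        have hup : ∑ p ∈ fib m, F p ≤ ((fib m).card : ℝ) * (a + 2 * ΔE) := by
          calc ∑ p ∈ fib m, F p ≤ ∑ _p ∈ fib m, (a + 2 * ΔE) := Finset.sum_le_sum hFub
            _ = _ := by rw [Finset.sum_const, nsmul_eq_mul]
        calc (∑ p ∈ fib m, F p) * cm
            ≤ (((fib m).card : ℝ) * (a + 2*ΔE)) * cm := mul_le_mul_of_nonneg_right hup hcm0
          _ = (a + 2*ΔE) * pR m := by rw [mul_comm ((fib m).card:ℝ) _, mul_assoc, hcmcard]
      rw [hsumeq, abs_sub_le_iff]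
      constructor <;> nlinarith [hpR0 m]
    · rw [Finset.not_nonempty_iff_eq_empty] at hne
      have h0 : pR m = 0 := by rw [hpR]; simp [hne]
      rw [hne, h0, Finset.sum_empty]
      simp
  have hkey : |∑ p, F p * (r p - q p)| ≤ 2 * ΔE := by
    rw [← hfibsum (fun p => F p * (r p - q p))]
    calc |∑ m : ι₁ × ι₂, ∑ p ∈ fib m, F p * (r p - q p)|
        ≤ ∑ m : ι₁ × ι₂, |∑ p ∈ fib m, F p * (r p - q p)| :=
          Finset.abs_sum_le_sum_abs _ _
      _ ≤ ∑ m : ι₁ × ι₂, 2 * ΔE * pR m := Finset.sum_le_sum fun m _ => hblock m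
      _ = 2 * ΔE * ∑ m : ι₁ × ι₂, pR m := by rw [Finset.mul_sum]
      _ = 2 * ΔE := by
          rw [show ∑ m : ι₁ × ι₂, pR m = ∑ m : ι₁ × ι₂, ∑ p ∈ fib m, r p from by rw [hpR],
            hfibsum r, hrsum, mul_one]
  -- final assembly
  have hb1 : ‖(Hint * ρ).trace‖ ≤ ‖Matrix.toEuclideanCLM (𝕜 := ℂ) Hint‖ := by
    have h := abs_trace_mul_le Hint ρ hρ
    rw [hτ, Complex.one_re, mul_one] at h
    exact h
  have hb2 : ‖(Hint * ρcg).trace‖ ≤ ‖Matrix.toEuclideanCLM (𝕜 := ℂ) Hint‖ := by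
    have h := abs_trace_mul_le Hint ρcg hρcgpsd
    rw [hcgtrace, Complex.one_re, mul_one] at h
    exact h
  rw [hsplit]
  calc ‖((∑ p, F p * (r p - q p) : ℝ) : ℂ)
        + ((Hint * ρ).trace - (Hint * ρcg).trace)‖
      ≤ ‖((∑ p, F p * (r p - q p) : ℝ) : ℂ)‖
        + ‖(Hint * ρ).trace - (Hint * ρcg).trace‖ := norm_add_le _ _
    _ ≤ |∑ p, F p * (r p - q p)|
        + (‖(Hint * ρ).trace‖ + ‖(Hint * ρcg).trace‖) := by
        rw [Complex.norm_real, Real.norm_eq_abs]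
        have : ‖(Hint * ρ).trace - (Hint * ρcg).trace‖
            ≤ ‖(Hint * ρ).trace‖ + ‖(Hint * ρcg).trace‖ := by
          exact norm_sub_le ((Hint * ρ).trace) ((Hint * ρcg).trace)
        exact add_le_add le_rfl this
    _ ≤ 2 * ΔE + (‖Matrix.toEuclideanCLM (𝕜 := ℂ) Hint‖
        + ‖Matrix.toEuclideanCLM (𝕜 := ℂ) Hint‖) := add_le_add hkey (add_le_add hb1 hb2)
    _ = 2 * ‖Matrix.toEuclideanCLM (𝕜 := ℂ) Hint‖ + 2 * ΔE := by ring
end
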